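/- The infinite-volume anchored map ψ_D : T → R is continuous with respect to the product topologies: for every t ∈ T and every k, any t' ∈ T agreeing with t on all edges having an endvertex in W_k = desc_t(D_k) satisfies ψ_D(t')|_{W_k} = ψ_D(t)|_{W_k}. -/

import Mathlib

open Finset
open scoped Classical

namespace Anchored

variable {V : Type*} [DecidableEq V]

/-- iterating a partial parent map; `none` represents the sink. -/
def iterP (p : V → Option V) : ℕ → V → Option V
  | 0, v => some v
  | n + 1, v => (p v).bind (iterP p n)

/-- walks in the multigraph `a` avoiding the set `A` -/
def ReachAvoid (a : V → V → ℕ) (A : Finset V) (u v : V) : Prop :=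
  ∃ (nn : ℕ) (f : ℕ → V), f 0 = u ∧ f nn = v ∧ (∀ j ≤ nn, f j ∉ A) ∧
    ∀ j < nn, 0 < a (f j) (f (j + 1))

/-- oriented edges (with multiplicity index) from `v` into the finite set `T` -/
def edgesTo (a : V → V → ℕ) (v : V) (T : Finset V) : Finset (V × ℕ) :=
  T.biUnion fun w => (Finset.range (a v w)).image fun i => (w, i)

variable (a : V → V → ℕ) (S : Finset V) (out : V → Finset V)

/-- number of edges from `v` to the sink of the wired graph on `S`;
`out v` is the set of heads of sink edges at `v` (actual vertices of `G`). -/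
def sk (v : V) : ℕ := ∑ w ∈ out v, a v w

/-- degree of `v` in the wired graph on `S` -/
def degS (v : V) : ℕ := sk a out v + ∑ w ∈ S, a v w

variable (η : V → ℕ) (D : ℕ → Finset V) (kk : ℕ)

/-- number of global steps allotted to each phase of the anchored burning -/
def plen : ℕ := S.card + 1

/-- Flattened anchored burning process: `U m` is the set of unburnt vertices
after `m` global steps; phase `i` (for `i = 1, …, kk + 1`) occupies the steps
`m ∈ [(i-1)·plen, i·plen)` and forbids burning the vertices of `D (kk - i + 1)`.
A vertex burns when its height is at least its number of edges to unburnt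
vertices (the sink being burnt at time `0`). -/
def U : ℕ → Finset V
  | 0 => S
  | m + 1 => (U m).filter fun v =>
      v ∈ D (kk - m / plen S) ∨ η v < ∑ w ∈ U m, a v w

/-- the (anchored) burning time of `v` -/
noncomputable def τ (v : V) : ℕ := sInf {m | v ∉ U a S η D kk m}

/-- number of oriented edges from `v` whose head was burnt strictly before `v`
(including the sink edges) -/
noncomputable def mv (v : V) : ℕ :=
  sk a out v + ∑ w ∈ S \ U a S η D kk (τ a S η D kk v - 1), a v w

/-- the set of candidate tree edges at `v`: the oriented edges from `v` to the
layer burnt at the previous step (at the first step of a phase: to everything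
burnt in earlier phases, including the sink) -/
noncomputable def Fv (v : V) : Finset (V × ℕ) :=
  if (τ a S η D kk v - 1) % plen S = 0 then
    edgesTo a v (out v) ∪ edgesTo a v (S \ U a S η D kk (τ a S η D kk v - 1))
  else
    edgesTo a v
      (U a S η D kk (τ a S η D kk v - 2) \ U a S η D kk (τ a S η D kk v - 1))

/-- `Spec … prec e` says that `e` encodes the spanning tree assigned to `η` by
the anchored burning bijection: each `v ∈ S` gets the edge of `F_v` having
exactly `ℓ` predecessors in the ordering `prec v`, where
`η v = deg v - m_v + ℓ`. -/
def Spec (prec : V → (V × ℕ) → (V × ℕ) → Prop) (e : V → Option (V × ℕ)) : Prop :=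
  (∀ v ∉ S, e v = none) ∧
  ∀ v ∈ S, ∃ ed : V × ℕ, e v = some ed ∧ ed ∈ Fv a S out η D kk v ∧
    η v + mv a S out η D kk v =
      degS a S out v + ((Fv a S out η D kk v).filter fun f => prec v f ed).card

/-- the parent map (toward the sink) of an encoded spanning tree -/
def par (e : V → Option (V × ℕ)) (v : V) : Option V :=
  (e v).bind fun p => if p.1 ∈ S then some p.1 else none

/-- spanning trees of the wired graph on `S`, oriented toward the sink:
every vertex of `S` carries exactly one valid oriented edge, and following
these edges one reaches the sink. -/
def IsSpanningTree (e : V → Option (V × ℕ)) : Prop :=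
  (∀ v ∉ S, e v = none) ∧
  (∀ v ∈ S, ∃ w i, e v = some (w, i) ∧ i < a v w ∧ (w ∈ S ∨ w ∈ out v)) ∧
  (∀ v ∈ S, ∃ m, iterP (par S e) m v = none)

/-- stable configurations on the wired graph on `S` -/
def Stable : Prop := ∀ v ∈ S, η v < degS a S out v

/-- ample for every nonempty subset of `S` -/
def Ample : Prop := ∀ F ⊆ S, F.Nonempty → ∃ x ∈ F, ∑ y ∈ F, a x y ≤ η x

/-- recurrent configurations on the wired graph on `S` -/
def Recurrent : Prop := Stable a S out η ∧ Ample a S η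

end Anchored

namespace Anchored

variable {V : Type*} [DecidableEq V]

/-- the unique infinite path in the forest from `v`, followed `n` steps -/
def iterF (t : V → V × ℕ) (n : ℕ) (v : V) : V := (fun x => (t x).1)^[n] v

/-- spanning forests of `G` all of whose components are infinite one-ended
trees, encoded by the parent map toward the unique end: every vertex has one
valid oriented edge, no cycles, and every vertex has finitely many
descendants (one-endedness). -/
def IsForest (a : V → V → ℕ) (t : V → V × ℕ) : Prop :=
  (∀ v, (t v).2 < a v (t v).1) ∧
  (∀ v n, 0 < n → iterF t n v ≠ v) ∧
  (∀ v, {w | ∃ n, iterF t n w = v}.Finite)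

/-- `Rel … t η` says `η = ψ_D t`: for every `k ≥ 1`, writing
`W = desc_t (D k)`, the restriction of `η` to `W` corresponds to the
restriction of `t` to the edges of `G*_{W,k}` under the finite anchored
burning bijection of `G*_{W,k}` (whose sink edges join `D k` to `V \ W`). -/
def Rel (a : V → V → ℕ) (nbrs : V → Finset V) (D : ℕ → Finset V)
    (prec : V → (V × ℕ) → (V × ℕ) → Prop) (t : V → V × ℕ) (η : V → ℕ) : Prop :=
  ∀ kk, 1 ≤ kk → ∀ W : Finset V,
    (∀ x, x ∈ W ↔ ∃ n, iterF t n x ∈ D kk) →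
    Spec a W (fun v => if v ∈ D kk then nbrs v \ W else ∅) η D kk prec
      (fun v => if v ∈ W then some (t v) else none)

end Anchored

namespace Anchored

variable {V : Type*} [DecidableEq V]

lemma U_succ (a : V → V → ℕ) (S : Finset V) (η : V → ℕ) (D : ℕ → Finset V) (kk m : ℕ) :
    U a S η D kk (m + 1) = (U a S η D kk m).filter fun v =>
      v ∈ D (kk - m / plen S) ∨ η v < ∑ w ∈ U a S η D kk m, a v w := rfl

lemma U_subset_S (a : V → V → ℕ) (S : Finset V) (η : V → ℕ) (D : ℕ → Finset V) (kk : ℕ) :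
    ∀ m, U a S η D kk m ⊆ S := by
  intro m
  induction m with
  | zero => exact subset_rfl
  | succ m ih => exact (Finset.filter_subset _ _).trans ih

lemma U_anti (a : V → V → ℕ) (S : Finset V) (η : V → ℕ) (D : ℕ → Finset V) (kk : ℕ)
    {m n : ℕ} (h : m ≤ n) : U a S η D kk n ⊆ U a S η D kk m := by
  induction n with
  | zero => simp_all
  | succ n ih =>
    rcases Nat.lt_or_ge m (n+1) with h' | h'
    · exact (Finset.filter_subset _ _).trans (ih (Nat.lt_succ_iff.mp h'))
    · have : m = n + 1 := le_antisymm h h'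
      subst this; exact subset_rfl

lemma fst_mem_of_mem_edgesTo {a : V → V → ℕ} {v : V} {T : Finset V} {ed : V × ℕ}
    (h : ed ∈ edgesTo a v T) : ed.1 ∈ T := by
  simp only [edgesTo, Finset.mem_biUnion, Finset.mem_image, Finset.mem_range] at h
  obtain ⟨w, hw, i, _, rfl⟩ := h
  exact hw


lemma U_stab (a : V → V → ℕ) (S : Finset V) (η : V → ℕ) (D : ℕ → Finset V) (kk : ℕ)
    {i : ℕ} (hi : 1 ≤ i) :
    U a S η D kk (i * plen S) = U a S η D kk (i * plen S - 1) := by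
  set p := plen S with hp
  have hp1 : 1 ≤ p := Nat.succ_le_succ (Nat.zero_le _)
  set b := (i - 1) * p with hb
  have hbp : b + p = i * p := by
    rw [hb, Nat.sub_one_mul]
    have : p ≤ i * p := Nat.le_mul_of_pos_left p (by omega)
    omega
  -- find a step in the phase where nothing burns
  have hex : ∃ s < p, U a S η D kk (b + s + 1) = U a S η D kk (b + s) := by
    by_contra hcon
    push_neg at hcon
    have hcard : ∀ s ≤ p, (U a S η D kk (b + s)).card + s ≤ (U a S η D kk b).card := by
      intro s hs
      induction s with
      | zero => simp
      | succ s ih =>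
        have hss : (U a S η D kk (b + s + 1)).card < (U a S η D kk (b + s)).card := by
          apply Finset.card_lt_card
          exact ⟨Finset.filter_subset _ _, fun hsub => (hcon s (by omega))
            (Finset.Subset.antisymm (Finset.filter_subset _ _) hsub)⟩
        have := ih (by omega)
        have : (U a S η D kk (b + (s+1))).card = (U a S η D kk (b + s + 1)).card := by
          rw [← Nat.add_assoc]
        omega
    have h1 := hcard p le_rfl
    have h2 : (U a S η D kk b).card ≤ S.card := Finset.card_le_card (U_subset_S a S η D kk b)
    have h3 : S.card + 1 = p := rfl
    omega
  obtain ⟨s0, hs0, heq0⟩ := hex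
  set j0 := b + s0 with hj0
  -- divisions within the phase are all i - 1
  have hdiv : ∀ j, b ≤ j → j < i * p → j / p = i - 1 := by
    intro j h1 h2
    apply Nat.div_eq_of_lt_le (by rwa [← hb])
    have : (i - 1 + 1) * p = i * p := by
      congr 1; omega
    omega
  -- propagate the stabilization to the end of the phase
  have hprop : ∀ r, j0 + r ≤ i * p → U a S η D kk (j0 + r) = U a S η D kk j0 := by
    intro r
    induction r with
    | zero => intro _; rfl
    | succ r ih =>
      intro hr
      have hr' : j0 + r < i * p := by omega
      have ihr := ih (by omega)
      have h1 : (j0 + r) / p = i - 1 := hdiv _ (by omega) hr'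
      have h2 : j0 / p = i - 1 := hdiv _ (by omega) (by omega)
      have : j0 + (r + 1) = (j0 + r) + 1 := by omega
      rw [this, U_succ, ihr, ← hp, h1, ← h2, ← U_succ, heq0]
  have hle : j0 ≤ i * p - 1 := by omega
  have e1 := hprop (i * p - j0) (by omega)
  have e2 := hprop (i * p - 1 - j0) (by omega)
  rw [show j0 + (i * p - j0) = i * p by omega] at e1
  rw [show j0 + (i * p - 1 - j0) = i * p - 1 by omega] at e2
  rw [e1, e2]


lemma no_cross {a : V → V → ℕ} {S : Finset V} {out : V → Finset V}
    {η η' : V → ℕ} {D : ℕ → Finset V} {kk : ℕ}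
    {prec : V → (V × ℕ) → (V × ℕ) → Prop} {e : V → Option (V × ℕ)}
    (hmono : Monotone D) (hD0 : D 0 = ∅)
    (hout : ∀ v w, w ∈ out v → w ∉ S)
    (h1 : Spec a S out η D kk prec e) (h2 : Spec a S out η' D kk prec e)
    (m : ℕ) (hU : ∀ j ≤ m, U a S η D kk j = U a S η' D kk j)
    {v : V} (hv1 : v ∈ U a S η' D kk (m + 1)) (hv0 : v ∈ U a S η D kk m) :
    v ∈ U a S η D kk (m + 1) := by
  classical
  by_contra hnot
  have hp1 : 1 ≤ plen S := Nat.succ_le_succ (Nat.zero_le _)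
  have hvS : v ∈ S := U_subset_S a S η D kk m hv0
  have hfail : v ∉ D (kk - m / plen S) ∧ ∑ w ∈ U a S η D kk m, a v w ≤ η v := by
    rw [U_succ, Finset.mem_filter] at hnot
    push_neg at hnot
    have := hnot hv0
    exact ⟨this.1, this.2⟩
  obtain ⟨hvD, hηge⟩ := hfail
  by_cases hne : {j | v ∉ U a S η' D kk j}.Nonempty
  · -- burns at some τ' ≥ m + 2
    have hτ'mem : v ∉ U a S η' D kk (τ a S η' D kk v) := Nat.sInf_mem hne
    set τ' := τ a S η' D kk v with hτ'def
    clear_value τ'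
    have hτ'ge : m + 2 ≤ τ' := by
      by_contra hcon
      push_neg at hcon
      exact hτ'mem (U_anti a S η' D kk (Nat.lt_succ_iff.mp hcon) hv1)
    have hτ'pred : v ∈ U a S η' D kk (τ' - 1) := by
      by_contra hcon
      have h' : τ a S η' D kk v ≤ τ' - 1 := Nat.sInf_le hcon
      rw [← hτ'def] at h'
      omega
    by_cases hr : (τ' - 1) % plen S = 0
    · -- case C : τ' - 1 = i * plen S is a phase start
      obtain ⟨i, hip⟩ : ∃ i, τ' - 1 = i * plen S :=
        ⟨(τ' - 1) / plen S, (Nat.div_mul_cancel (Nat.dvd_of_mod_eq_zero hr)).symm⟩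
      have him : m / plen S < i := by
        by_contra hcon
        push_neg at hcon
        have h1' : (m / plen S) * plen S ≤ m := Nat.div_mul_le_self m (plen S)
        have h2' : i * plen S ≤ (m / plen S) * plen S := Nat.mul_le_mul_right _ hcon
        have h3' : i * plen S ≤ m := le_trans h2' h1'
        omega
      have hi1 : 1 ≤ i :=
        Nat.pos_of_ne_zero (fun h => by subst h; exact Nat.not_lt_zero _ him)
      have hstab := U_stab a S η' D kk (i := i) hi1
      have hvip : v ∈ U a S η' D kk (i * plen S) := by rw [← hip]; exact hτ'pred
      have hsurv : η' v < ∑ w ∈ U a S η' D kk (i * plen S - 1), a v w := by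
        have h0 : i * plen S = (i * plen S - 1) + 1 := by
          have : 1 ≤ i * plen S := by omega
          omega
        have hv' : v ∈ U a S η' D kk ((i * plen S - 1) + 1) := by rw [← h0]; exact hvip
        rw [U_succ, Finset.mem_filter] at hv'
        have hdiv : (i * plen S - 1) / plen S = i - 1 := by
          apply Nat.div_eq_of_lt_le
          · have h3' : (i - 1) * plen S + plen S = i * plen S := by
              rw [Nat.sub_one_mul]
              have : plen S ≤ i * plen S := Nat.le_mul_of_pos_left _ (by omega)
              omega
            omega
          · have h3' : (i - 1 + 1) * plen S = i * plen S := by congr 1; omega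
            omega
        rw [hdiv] at hv'
        rcases hv'.2 with hD | hlt
        · exact absurd (hmono (by omega : kk - (i - 1) ≤ kk - m / plen S) hD) hvD
        · exact hlt
      have hburn : ∑ w ∈ U a S η' D kk (i * plen S), a v w ≤ η' v := by
        have h0 : τ' = i * plen S + 1 := by omega
        have hv' : v ∉ U a S η' D kk (i * plen S + 1) := by rw [← h0]; exact hτ'mem
        rw [U_succ, Finset.mem_filter] at hv'
        push_neg at hv'
        exact (hv' hvip).2
      rw [hstab] at hburn
      omega
    · -- case A/B : the tree edge points both into and out of `U m`
      obtain ⟨ed, hed, hFv', -⟩ := h2.2 v hvS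
      obtain ⟨ed₁, hed₁, hFv, -⟩ := h1.2 v hvS
      have hee : ed₁ = ed := Option.some.inj (hed₁.symm.trans hed)
      subst hee
      have hin : ed₁.1 ∈ U a S η D kk m := by
        rw [Fv, ← hτ'def, if_neg (by exact hr)] at hFv'
        have h1' := fst_mem_of_mem_edgesTo hFv'
        have h2' : ed₁.1 ∈ U a S η' D kk (τ' - 2) := (Finset.mem_sdiff.mp h1').1
        have h3' : U a S η' D kk (τ' - 2) ⊆ U a S η' D kk m :=
          U_anti a S η' D kk (by omega)
        rw [← hU m le_rfl] at h3'
        exact h3' h2'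
      have hτ : τ a S η D kk v = m + 1 := by
        apply le_antisymm
        · exact Nat.sInf_le hnot
        · by_contra hcon
          push_neg at hcon
          have hmem := Nat.sInf_mem (⟨m+1, hnot⟩ : Set.Nonempty {j | v ∉ U a S η D kk j})
          exact hmem (U_anti a S η D kk (by omega : τ a S η D kk v ≤ m) hv0)
      have hnotin : ed₁.1 ∉ U a S η D kk m := by
        rw [Fv, hτ] at hFv
        simp only [Nat.add_sub_cancel] at hFv
        by_cases hr0 : m % plen S = 0
        · rw [if_pos hr0] at hFv
          rcases Finset.mem_union.mp hFv with hc | hc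
          · intro hmem
            exact hout v ed₁.1 (fst_mem_of_mem_edgesTo hc) (U_subset_S a S η D kk m hmem)
          · exact (Finset.mem_sdiff.mp (fst_mem_of_mem_edgesTo hc)).2
        · rw [if_neg hr0] at hFv
          exact (Finset.mem_sdiff.mp (fst_mem_of_mem_edgesTo hFv)).2
      exact hnotin hin
  · -- v never burns under η' : contradiction with the Spec equation
    have hall : ∀ j, v ∈ U a S η' D kk j := by
      intro j; by_contra hc; exact hne ⟨j, hc⟩
    have hτ0 : τ a S η' D kk v = 0 := by
      rw [τ, Set.not_nonempty_iff_eq_empty.mp hne, Nat.sInf_empty]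
    obtain ⟨ed, hed, hFved, heq'⟩ := h2.2 v hvS
    have hmv : mv a S out η' D kk v = sk a out v := by
      rw [mv, hτ0]
      rw [show (0:ℕ) - 1 = 0 from rfl]
      rw [show U a S η' D kk 0 = S from rfl, Finset.sdiff_self, Finset.sum_empty]
      omega
    rw [hmv, degS] at heq'
    have hub : ∑ w ∈ S, a v w ≤ η' v := by omega
    have hlt : η' v < ∑ w ∈ U a S η' D kk (kk * plen S), a v w := by
      have hv' := hall (kk * plen S + 1)
      rw [U_succ, Finset.mem_filter] at hv'
      have hdiv : kk * plen S / plen S = kk := Nat.mul_div_cancel kk (by omega)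
      rw [hdiv, Nat.sub_self, hD0] at hv'
      rcases hv'.2 with hD | h
      · exact absurd hD (Finset.notMem_empty v)
      · exact h
    have : ∑ w ∈ U a S η' D kk (kk * plen S), a v w ≤ ∑ w ∈ S, a v w :=
      Finset.sum_le_sum_of_subset (U_subset_S a S η' D kk _)
    omega


lemma spec_inj {a : V → V → ℕ} {S : Finset V} {out : V → Finset V}
    {η η' : V → ℕ} {D : ℕ → Finset V} {kk : ℕ}
    {prec : V → (V × ℕ) → (V × ℕ) → Prop} {e : V → Option (V × ℕ)}
    (hmono : Monotone D) (hD0 : D 0 = ∅)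
    (hout : ∀ v w, w ∈ out v → w ∉ S)
    (h1 : Spec a S out η D kk prec e) (h2 : Spec a S out η' D kk prec e) :
    ∀ v ∈ S, η v = η' v := by
  classical
  have hUeq : ∀ m, U a S η D kk m = U a S η' D kk m := by
    intro m
    induction m using Nat.strong_induction_on with
    | _ m ih =>
      match m with
      | 0 => rfl
      | Nat.succ m =>
        have hU : ∀ j ≤ m, U a S η D kk j = U a S η' D kk j :=
          fun j hj => ih j (Nat.lt_succ_of_le hj)
        have hU' : ∀ j ≤ m, U a S η' D kk j = U a S η D kk j :=
          fun j hj => (hU j hj).symm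
        apply Finset.Subset.antisymm
        · intro v hv
          have hv0 : v ∈ U a S η' D kk m := by
            rw [← hU m le_rfl]
            exact Finset.filter_subset _ _ hv
          exact no_cross hmono hD0 hout h2 h1 m hU' hv hv0
        · intro v hv
          have hv0 : v ∈ U a S η D kk m := by
            rw [hU m le_rfl]
            exact Finset.filter_subset _ _ hv
          exact no_cross hmono hD0 hout h1 h2 m hU hv hv0
  intro v hv
  have hτ : τ a S η D kk v = τ a S η' D kk v := by
    rw [τ, τ]
    congr 1
    ext j
    simp only [Set.mem_setOf_eq, hUeq j]
  have hmveq : mv a S out η D kk v = mv a S out η' D kk v := by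
    rw [mv, mv, hτ, hUeq]
  have hFveq : Fv a S out η D kk v = Fv a S out η' D kk v := by
    rw [Fv, Fv, hτ, hUeq, hUeq]
  obtain ⟨ed, hed, -, heq⟩ := h1.2 v hv
  obtain ⟨ed', hed', -, heq'⟩ := h2.2 v hv
  have : ed = ed' := Option.some.inj (hed.symm.trans hed')
  subst this
  rw [hmveq, hFveq] at heq
  omega

lemma iterF_succ' (t : V → V × ℕ) (n : ℕ) (v : V) :
    iterF t (n + 1) v = (t (iterF t n v)).1 :=
  Function.iterate_succ_apply' _ n v

lemma iterF_succ (t : V → V × ℕ) (n : ℕ) (v : V) :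
    iterF t (n + 1) v = iterF t n (t v).1 :=
  Function.iterate_succ_apply _ n v

lemma iterF_add (t : V → V × ℕ) (m n : ℕ) (v : V) :
    iterF t (m + n) v = iterF t m (iterF t n v) :=
  Function.iterate_add_apply _ m n v

/-- a forest `t'` agreeing with `t` on edges meeting `W = desc_t (D kk)`
coincides with `t` on `W`. -/
lemma forest_eq_on {a : V → V → ℕ} {t t' : V → V × ℕ} {W : Finset V} {D : ℕ → Finset V}
    {kk : ℕ}
    (ht : IsForest a t) (ht' : IsForest a t')
    (hW : ∀ x, x ∈ W ↔ ∃ n, iterF t n x ∈ D kk)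
    (hagree : ∀ (v w : V) (i : ℕ), v ∈ W ∨ w ∈ W →
      ((t v = (w, i) ∨ t w = (v, i)) ↔ (t' v = (w, i) ∨ t' w = (v, i)))) :
    ∀ v ∈ W, t' v = t v := by
  intro v hv
  by_contra hne
  have key : ∀ r, iterF t' r v ∈ W ∧ t' (iterF t' r v) ≠ t (iterF t' r v) ∧
      iterF t r (iterF t' r v) = v := by
    intro r
    induction r with
    | zero => exact ⟨hv, hne, rfl⟩
    | succ r ih =>
      obtain ⟨huW, hbad, hit⟩ := ih
      set u := iterF t' r v with hu
      have hs : iterF t' (r + 1) v = (t' u).1 := iterF_succ' t' r v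
      have ht'u : t' u = ((t' u).1, (t' u).2) := rfl
      have hor := (hagree u (t' u).1 (t' u).2 (Or.inl huW)).mpr (Or.inl ht'u)
      rcases hor with h | h
      · exact absurd (ht'u.trans h.symm) hbad
      · -- h : t (t' u).1 = (u, (t' u).2)
        have hyW : (t' u).1 ∈ W := by
          rw [hW]
          obtain ⟨n, hn⟩ := (hW u).mp huW
          exact ⟨n + 1, by rw [iterF_succ, h]; exact hn⟩
        refine ⟨hs ▸ hyW, hs ▸ ?_, ?_⟩
        · intro hcon
          apply ht'.2.1 u 2 (by norm_num)
          have e1 : iterF t' 1 u = (t' u).1 := iterF_succ' t' 0 u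
          have e2 : iterF t' 2 u = (t' (iterF t' 1 u)).1 := iterF_succ' t' 1 u
          rw [e2, e1, hcon, h]
        · rw [hs, iterF_succ, h]
          exact hit
  have hinj : Function.Injective (fun r => iterF t' r v) := by
    intro r s hrs
    by_contra hne'
    rcases Nat.lt_or_ge r s with h | h
    · apply ht'.2.1 (iterF t' r v) (s - r) (by omega)
      rw [← iterF_add]
      rw [show s - r + r = s by omega]
      exact hrs.symm
    · have h' : s < r := by omega
      apply ht'.2.1 (iterF t' s v) (r - s) (by omega)
      rw [← iterF_add]
      rw [show r - s + s = r by omega]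
      exact hrs
  have hmem : ∀ r : ℕ, iterF t' r v ∈ {w | ∃ n, iterF t n w = v} :=
    fun r => ⟨r, (key r).2.2⟩
  exact (ht.2.2 v).not_infinite (Set.infinite_of_injective_forall_mem hinj hmem)

/-- under the same agreement, `W` is also the set of `t'`-descendants of `D kk`. -/
lemma forest_W_char {a : V → V → ℕ} {t t' : V → V × ℕ} {W : Finset V} {D : ℕ → Finset V}
    {kk : ℕ}
    (ht : IsForest a t) (ht' : IsForest a t')
    (hW : ∀ x, x ∈ W ↔ ∃ n, iterF t n x ∈ D kk)
    (hagree : ∀ (v w : V) (i : ℕ), v ∈ W ∨ w ∈ W →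
      ((t v = (w, i) ∨ t w = (v, i)) ↔ (t' v = (w, i) ∨ t' w = (v, i)))) :
    ∀ x, x ∈ W ↔ ∃ n, iterF t' n x ∈ D kk := by
  have heq := forest_eq_on ht ht' hW hagree
  have hDW : ∀ d ∈ D kk, d ∈ W := fun d hd => (hW d).mpr ⟨0, hd⟩
  intro x
  constructor
  · rintro hx
    obtain ⟨n, hn⟩ := (hW x).mp hx
    have hmid : ∀ m ≤ n, iterF t m x ∈ W := by
      intro m hm
      rw [hW]
      exact ⟨n - m, by rw [← iterF_add, show n - m + m = n by omega]; exact hn⟩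
    have hsame : ∀ m ≤ n, iterF t' m x = iterF t m x := by
      intro m hm
      induction m with
      | zero => rfl
      | succ m ih =>
        rw [iterF_succ', iterF_succ', ih (by omega), heq _ (hmid m (by omega))]
    exact ⟨n, by rw [hsame n le_rfl]; exact hn⟩
  · rintro ⟨n, hn⟩
    have hstep : ∀ z, (t' z).1 ∈ W → z ∈ W := by
      intro z hz
      have ht'z : t' z = ((t' z).1, (t' z).2) := rfl
      have hor := (hagree z (t' z).1 (t' z).2 (Or.inr hz)).mpr (Or.inl ht'z)
      rcases hor with h | h
      · rw [hW]
        obtain ⟨ny, hy⟩ := (hW _).mp hz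
        exact ⟨ny + 1, by rw [iterF_succ, h]; exact hy⟩
      · exfalso
        apply ht'.2.1 z 2 (by norm_num)
        have e1 : iterF t' 1 z = (t' z).1 := iterF_succ' t' 0 z
        have e2 : iterF t' 2 z = (t' (iterF t' 1 z)).1 := iterF_succ' t' 1 z
        rw [e2, e1, heq _ hz, h]
    have hback : ∀ k ≤ n, iterF t' (n - k) x ∈ W := by
      intro k
      induction k with
      | zero => intro _; exact hDW _ hn
      | succ k ih =>
        intro hk
        apply hstep
        have : (n - (k+1)) + 1 = n - k := by omega
        have h' := ih (by omega)
        rw [← this] at h'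
        rw [iterF_succ'] at h'
        exact h'
    have := hback n le_rfl
    simpa [iterF] using this
end Anchored
/-- The infinite-volume anchored map `ψ_D` is continuous:
for every `t ∈ T` and every `k ≥ 1`, any `t' ∈ T` agreeing with `t` on all
(unoriented, indexed) edges having an endvertex in `W_k = desc_t (D k)`
satisfies `ψ_D t' = ψ_D t` on `W_k`. -/
theorem stmt8 {V : Type*} [DecidableEq V] [Infinite V]
    (a : V → V → ℕ) (nbrs : V → Finset V)
    (hsymm : ∀ u v, a u v = a v u) (hloop : ∀ v, a v v = 0)
    (hnbrs : ∀ v w, w ∈ nbrs v ↔ 0 < a v w)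
    (hlf : ∀ v, {w | 0 < a v w}.Finite)
    (hconn : ∀ u v : V, Anchored.ReachAvoid a ∅ u v)
    (D : ℕ → Finset V) (hmono : Monotone D) (hD0 : D 0 = ∅)
    (hcover : ∀ v, ∃ j, v ∈ D j)
    (hsc : ∀ j, 1 ≤ j → ∀ v ∉ D j, {w | Anchored.ReachAvoid a (D j) v w}.Infinite)
    (prec : V → (V × ℕ) → (V × ℕ) → Prop)
    (hprec : ∀ v, IsStrictTotalOrder (V × ℕ) (prec v))
    (t t' : V → V × ℕ) (ht : Anchored.IsForest a t) (ht' : Anchored.IsForest a t')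
    (kk : ℕ) (hkk : 1 ≤ kk)
    (W : Finset V) (hW : ∀ x, x ∈ W ↔ ∃ n, Anchored.iterF t n x ∈ D kk)
    (hagree : ∀ (v w : V) (i : ℕ), v ∈ W ∨ w ∈ W →
      ((t v = (w, i) ∨ t w = (v, i)) ↔ (t' v = (w, i) ∨ t' w = (v, i))))
    (η η' : V → ℕ)
    (hrel : Anchored.Rel a nbrs D prec t η)
    (hrel' : Anchored.Rel a nbrs D prec t' η') :
    ∀ v ∈ W, η v = η' v := by
  classical
  have heq := Anchored.forest_eq_on ht ht' hW hagree
  have hW' := Anchored.forest_W_char ht ht' hW hagree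
  have h1 := hrel kk hkk W hW
  have h2 := hrel' kk hkk W hW'
  have hee : (fun v => if v ∈ W then some (t' v) else none)
      = (fun v => if v ∈ W then some (t v) else none) := by
    funext v
    by_cases hv : v ∈ W
    · simp [hv, heq v hv]
    · simp [hv]
  rw [hee] at h2
  have hout : ∀ v w, w ∈ (if v ∈ D kk then nbrs v \ W else ∅) → w ∉ W := by
    intro v w hw
    by_cases hv : v ∈ D kk
    · rw [if_pos hv] at hw
      exact (Finset.mem_sdiff.mp hw).2
    · rw [if_neg hv] at hw
      exact absurd hw (Finset.notMem_empty w)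
  exact Anchored.spec_inj hmono hD0 hout h1 h2
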